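/- Let 1 ≤ k ≤ d−1, t ∈ ℕ, and let σ_{k,d} be an O(d)-invariant Borel probability measure on G_{k,d}. For any points P_1, …, P_n ∈ G_{k,d} and any real weights ω_1, …, ω_n with Σ_{j=1}^n ω_j = 1, the t-fusion frame potential satisfies Σ_{i=1}^n Σ_{j=1}^n ω_i ω_j tr(P_i P_j)^t ≥ ∫_{G_{k,d}} ∫_{G_{k,d}} tr(P R)^t dσ_{k,d}(P) dσ_{k,d}(R). -/

import Mathlib

open Matrix MeasureTheory MvPolynomial

noncomputable instance (d : ℕ) : MeasurableSpace (Matrix (Fin d) (Fin d) ℝ) :=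
  inferInstanceAs (MeasurableSpace (Fin d → Fin d → ℝ))

/-- The Grassmannian `G_{k,d}` of rank-`k` orthogonal projectors in `ℝ^{d×d}`. -/
def Grass (d k : ℕ) : Set (Matrix (Fin d) (Fin d) ℝ) :=
  {P | P.IsSymm ∧ P * P = P ∧ P.trace = k}

lemma conj_mem_Grass {d k : ℕ} {U : Matrix (Fin d) (Fin d) ℝ}
    (hU : U ∈ Matrix.orthogonalGroup (Fin d) ℝ) {P : Matrix (Fin d) (Fin d) ℝ}
    (hP : P ∈ Grass d k) : U * P * Uᵀ ∈ Grass d k := by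
  obtain ⟨hs, hi, ht⟩ := hP
  have hU2 : Uᵀ * U = 1 := by
    have := (Matrix.mem_orthogonalGroup_iff' (Fin d) ℝ).mp hU
    simpa using this
  refine ⟨?_, ?_, ?_⟩
  · unfold Matrix.IsSymm
    simp [Matrix.transpose_mul, hs.eq, Matrix.mul_assoc]
  · calc U * P * Uᵀ * (U * P * Uᵀ) = U * P * (Uᵀ * U) * P * Uᵀ := by
          simp [Matrix.mul_assoc]
    _ = U * (P * P) * Uᵀ := by simp [hU2, Matrix.mul_assoc]
    _ = U * P * Uᵀ := by rw [hi]
  · rw [Matrix.trace_mul_cycle, hU2, Matrix.one_mul, ht]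

/-- The conjugation action `P ↦ U P Uᵀ` of an orthogonal matrix `U` on the Grassmannian. -/
def conjGrass {d k : ℕ} {U : Matrix (Fin d) (Fin d) ℝ}
    (hU : U ∈ Matrix.orthogonalGroup (Fin d) ℝ) (P : Grass d k) : Grass d k :=
  ⟨U * P.val * Uᵀ, conj_mem_Grass hU P.property⟩

/-- `σ` is an `O(d)`-invariant measure on the Grassmannian `G_{k,d}`. -/
def IsOrthInvariant {d k : ℕ} (σ : Measure (Grass d k)) : Prop :=
  ∀ U : Matrix (Fin d) (Fin d) ℝ, ∀ hU : U ∈ Matrix.orthogonalGroup (Fin d) ℝ,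
    Measure.map (conjGrass hU) σ = σ

/-- `{(P j, ω j)}` is a cubature for `Hom_t(G_{k,d})` with respect to `σ`:
for every homogeneous polynomial `p` of degree `t` in the matrix entries, the integral of `p`
over the Grassmannian equals the weighted sum of point evaluations. -/
def IsCubature {d k : ℕ} (σ : Measure (Grass d k)) {n : ℕ}
    (P : Fin n → Grass d k) (ω : Fin n → ℝ) (t : ℕ) : Prop :=
  ∀ p ∈ MvPolynomial.homogeneousSubmodule (Fin d × Fin d) ℝ t,
    ∫ Q : Grass d k, MvPolynomial.eval (fun ij => (Q : Matrix (Fin d) (Fin d) ℝ) ij.1 ij.2) p ∂σ =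
      ∑ j, ω j * MvPolynomial.eval (fun ij => (P j : Matrix (Fin d) (Fin d) ℝ) ij.1 ij.2) p

section FFPAux

variable {d k : ℕ}

/-- Diagonal entries of a projector are sums of squares of a row. -/
lemma Grass.diag_eq_sum_sq {P : Matrix (Fin d) (Fin d) ℝ} (hP : P ∈ Grass d k) (i : Fin d) :
    P i i = ∑ j, (P i j) ^ 2 := by
  obtain ⟨hs, hi, -⟩ := hP
  conv_lhs => rw [← hi]
  rw [Matrix.mul_apply]
  refine Finset.sum_congr rfl fun j _ => ?_
  rw [hs.apply i j]; ring

/-- Entries of a projector are bounded by `1` in absolute value. -/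
lemma Grass.abs_entry_le_one {P : Matrix (Fin d) (Fin d) ℝ} (hP : P ∈ Grass d k) (i j : Fin d) :
    |P i j| ≤ 1 := by
  have h2 : (P i j) ^ 2 ≤ P i i := by
    rw [Grass.diag_eq_sum_sq hP i]
    exact Finset.single_le_sum (f := fun j => (P i j) ^ 2) (fun _ _ => sq_nonneg _)
      (Finset.mem_univ j)
  have h4 : (P i i) ^ 2 ≤ P i i := by
    conv_rhs => rw [Grass.diag_eq_sum_sq hP i]
    exact Finset.single_le_sum (f := fun j => (P i j) ^ 2) (fun _ _ => sq_nonneg _)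
      (Finset.mem_univ i)
  have h5 : P i i ≤ 1 := by nlinarith
  nlinarith [abs_nonneg (P i j), sq_abs (P i j)]

/-- The monomial map `φ`. -/
noncomputable def phiG (d k t : ℕ) (Q : Grass d k) (g : Fin t → Fin d × Fin d) : ℝ :=
  ∏ s, (Q : Matrix (Fin d) (Fin d) ℝ) (g s).1 (g s).2

lemma measurable_entryG (i j : Fin d) :
    Measurable (fun Q : Grass d k => (Q : Matrix (Fin d) (Fin d) ℝ) i j) :=
  (measurable_pi_apply j).comp ((measurable_pi_apply i).comp measurable_subtype_coe)

lemma phiG_measurable (t : ℕ) (g : Fin t → Fin d × Fin d) :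
    Measurable (fun Q : Grass d k => phiG d k t Q g) :=
  Finset.measurable_prod _ fun s _ => measurable_entryG (g s).1 (g s).2

lemma phiG_abs_le (t : ℕ) (Q : Grass d k) (g : Fin t → Fin d × Fin d) :
    |phiG d k t Q g| ≤ 1 := by
  rw [phiG, Finset.abs_prod]
  refine Finset.prod_le_one (fun s _ => abs_nonneg _) fun s _ => ?_
  exact Grass.abs_entry_le_one Q.2 _ _

lemma phiG_integrable (t : ℕ) (σ : Measure (Grass d k)) [IsProbabilityMeasure σ]
    (g : Fin t → Fin d × Fin d) : Integrable (fun Q => phiG d k t Q g) σ :=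
  ⟨(phiG_measurable t g).aestronglyMeasurable,
    HasFiniteIntegral.of_bounded (C := 1) (ae_of_all _ fun Q => by
      simpa [Real.norm_eq_abs] using phiG_abs_le t Q g)⟩

/-- Expansion of `tr(QR)^t` as a sum of products of monomials. -/
lemma trace_pow_expand (t : ℕ) (Q R : Grass d k) :
    (Matrix.trace ((Q : Matrix (Fin d) (Fin d) ℝ) * (R : Matrix (Fin d) (Fin d) ℝ))) ^ t =
      ∑ g : Fin t → Fin d × Fin d, phiG d k t Q g * phiG d k t R g := by
  have h1 : Matrix.trace ((Q : Matrix (Fin d) (Fin d) ℝ) * (R : Matrix (Fin d) (Fin d) ℝ)) =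
      ∑ p : Fin d × Fin d,
        (Q : Matrix (Fin d) (Fin d) ℝ) p.1 p.2 * (R : Matrix (Fin d) (Fin d) ℝ) p.1 p.2 := by
    rw [Fintype.sum_prod_type]
    simp only [Matrix.trace, Matrix.diag, Matrix.mul_apply]
    exact Finset.sum_congr rfl fun i _ => Finset.sum_congr rfl fun j _ => by
      rw [R.2.1.apply i j]
  rw [h1, Finset.sum_pow' Finset.univ _ t, Fintype.piFinset_univ]
  refine Finset.sum_congr rfl fun g _ => ?_
  rw [phiG, phiG, ← Finset.prod_mul_distrib]

/-- Any projector in the Grassmannian is orthogonally conjugate to a 0/1 diagonal matrix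
with exactly `k` ones. -/
lemma Grass.exists_diagonal {P : Matrix (Fin d) (Fin d) ℝ} (hP : P ∈ Grass d k) :
    ∃ U ∈ Matrix.orthogonalGroup (Fin d) ℝ, ∃ v : Fin d → ℝ,
      (∀ i, v i = 0 ∨ v i = 1) ∧
      (Finset.univ.filter (fun i => v i = 1)).card = k ∧
      P = U * Matrix.diagonal v * Uᵀ := by
  classical
  have hH : P.IsHermitian := (Matrix.conjTranspose_eq_transpose_of_trivial P).trans hP.1.eq
  set U : Matrix (Fin d) (Fin d) ℝ := (hH.eigenvectorUnitary : Matrix (Fin d) (Fin d) ℝ) with hUdef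
  have hUmem : U ∈ Matrix.orthogonalGroup (Fin d) ℝ := hH.eigenvectorUnitary.2
  have hstar : star U = Uᵀ :=
    (Matrix.star_eq_conjTranspose U).trans (Matrix.conjTranspose_eq_transpose_of_trivial U)
  set v : Fin d → ℝ := hH.eigenvalues with hvdef
  have hPU : P = U * Matrix.diagonal v * Uᵀ := by
    have := hH.spectral_theorem
    rw [Unitary.conjStarAlgAut_apply, ← hUdef, hstar] at this
    simpa using this
  have hUtU : Uᵀ * U = 1 := by
    have := (Matrix.mem_orthogonalGroup_iff' (Fin d) ℝ).mp hUmem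
    exact this
  have hUUt : U * Uᵀ = 1 := by
    have := (Matrix.mem_orthogonalGroup_iff (Fin d) ℝ).mp hUmem
    exact this
  have hD : Uᵀ * P * U = Matrix.diagonal v := by
    rw [hPU]
    calc Uᵀ * (U * Matrix.diagonal v * Uᵀ) * U
        = (Uᵀ * U) * Matrix.diagonal v * (Uᵀ * U) := by
          simp only [Matrix.mul_assoc]
    _ = Matrix.diagonal v := by rw [hUtU]; simp
  have hDD : Matrix.diagonal v * Matrix.diagonal v = Matrix.diagonal v := by
    rw [← hD]
    calc (Uᵀ * P * U) * (Uᵀ * P * U) = Uᵀ * (P * (U * Uᵀ) * P) * U := by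
          simp only [Matrix.mul_assoc]
    _ = Uᵀ * (P * P) * U := by rw [hUUt]; simp [Matrix.mul_assoc]
    _ = Uᵀ * P * U := by rw [hP.2.1, Matrix.mul_assoc]
  have hv01 : ∀ i, v i = 0 ∨ v i = 1 := by
    intro i
    have h := congrArg (fun M => M i i) hDD
    simp only [Matrix.diagonal_mul_diagonal, Matrix.diagonal_apply_eq] at h
    rcases mul_eq_zero.mp (show v i * (v i - 1) = 0 by linear_combination h) with h' | h'
    · exact Or.inl h'
    · exact Or.inr (by linarith)
  have htr : ∑ i, v i = (k : ℝ) := by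
    have := hP.2.2
    rw [hPU, Matrix.trace_mul_cycle, hUtU, Matrix.one_mul, Matrix.trace_diagonal] at this
    exact this
  have hcard : (Finset.univ.filter (fun i => v i = 1)).card = k := by
    have h2 : ∑ i, v i = ((Finset.univ.filter (fun i => v i = 1)).card : ℝ) := by
      rw [← Finset.sum_boole]
      refine Finset.sum_congr rfl fun i _ => ?_
      rcases hv01 i with h | h <;> simp [h]
    have : ((Finset.univ.filter (fun i => v i = 1)).card : ℝ) = (k : ℝ) := by
      rw [← h2]; exact htr
    exact_mod_cast this
  exact ⟨U, hUmem, v, hv01, hcard, hPU⟩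

/-- Two 0/1 vectors with the same number of ones differ by a permutation. -/
lemma exists_perm_comp {v w : Fin d → ℝ} (hv : ∀ i, v i = 0 ∨ v i = 1)
    (hw : ∀ i, w i = 0 ∨ w i = 1)
    (hc : (Finset.univ.filter (fun i => v i = 1)).card
        = (Finset.univ.filter (fun i => w i = 1)).card) :
    ∃ π : Equiv.Perm (Fin d), w ∘ π = v := by
  classical
  have hce : Fintype.card {i // v i = 1} = Fintype.card {i // w i = 1} := by
    rw [Fintype.card_subtype, Fintype.card_subtype]; exact hc
  let e : {i // v i = 1} ≃ {i // w i = 1} := Fintype.equivOfCardEq hce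
  let f : {i // ¬ v i = 1} ≃ {i // ¬ w i = 1} := Fintype.equivOfCardEq (by
    rw [Fintype.card_subtype_compl, Fintype.card_subtype_compl, hce])
  refine ⟨Equiv.subtypeCongr e f, funext fun i => ?_⟩
  by_cases h : v i = 1
  · have hs : (Equiv.sumCompl fun x => v x = 1).symm i = Sum.inl ⟨i, h⟩ :=
      Equiv.sumCompl_symm_apply_of_pos (p := fun x => v x = 1) h
    have key : (Equiv.subtypeCongr e f) i = ↑(e ⟨i, h⟩) := by
      simp [Equiv.subtypeCongr, Equiv.trans_apply, hs]
    have : w ((Equiv.subtypeCongr e f) i) = 1 := by rw [key]; exact (e ⟨i, h⟩).2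
    rw [Function.comp_apply, this, h]
  · have h0 : v i = 0 := (hv i).resolve_right h
    have hs : (Equiv.sumCompl fun x => v x = 1).symm i = Sum.inr ⟨i, h⟩ :=
      Equiv.sumCompl_symm_apply_of_neg (p := fun x => v x = 1) h
    have key : (Equiv.subtypeCongr e f) i = ↑(f ⟨i, h⟩) := by
      simp [Equiv.subtypeCongr, Equiv.trans_apply, hs]
    have : ¬ w ((Equiv.subtypeCongr e f) i) = 1 := by rw [key]; exact (f ⟨i, h⟩).2
    rw [Function.comp_apply, (hw _).resolve_right this, h0]

lemma star_eq_transposeR (A : Matrix (Fin d) (Fin d) ℝ) : star A = Aᵀ :=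
  (Matrix.star_eq_conjTranspose A).trans (Matrix.conjTranspose_eq_transpose_of_trivial A)

/-- Conjugating a diagonal matrix by a permutation matrix permutes the diagonal. -/
lemma perm_diag_conj (π : Equiv.Perm (Fin d)) (w : Fin d → ℝ) :
    ∃ W ∈ Matrix.orthogonalGroup (Fin d) ℝ,
      Matrix.diagonal (w ∘ π) = W * Matrix.diagonal w * Wᵀ := by
  classical
  set W : Matrix (Fin d) (Fin d) ℝ := π.toPEquiv.toMatrix with hW
  have hWt : Wᵀ = (π.symm).toPEquiv.toMatrix := by
    rw [Equiv.toPEquiv_symm, PEquiv.toMatrix_symm]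
  have hWWt : W * Wᵀ = 1 := by
    rw [hWt, hW, ← PEquiv.toMatrix_trans, ← Equiv.toPEquiv_trans]
    simp [Equiv.toPEquiv_refl]
  refine ⟨W, ?_, ?_⟩
  · rw [Matrix.mem_orthogonalGroup_iff]
    exact hWWt
  · rw [hWt, hW, PEquiv.toMatrix_toPEquiv_mul, PEquiv.mul_toMatrix_toPEquiv]
    simp [Matrix.submatrix_submatrix]

/-- Transitivity: any two points of the Grassmannian are orthogonally conjugate. -/
lemma Grass.exists_conj {P P' : Matrix (Fin d) (Fin d) ℝ} (hP : P ∈ Grass d k)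
    (hP' : P' ∈ Grass d k) :
    ∃ V ∈ Matrix.orthogonalGroup (Fin d) ℝ, P' = V * P * Vᵀ := by
  classical
  obtain ⟨U, hU, v, hv01, hvcard, hPU⟩ := Grass.exists_diagonal hP
  obtain ⟨U', hU', w, hw01, hwcard, hPU'⟩ := Grass.exists_diagonal hP'
  obtain ⟨π, hπ⟩ := exists_perm_comp hw01 hv01 (by rw [hwcard, hvcard])
  obtain ⟨W, hWmem, hWconj⟩ := perm_diag_conj π v
  have hwv : Matrix.diagonal w = W * Matrix.diagonal v * Wᵀ := by rw [← hπ]; exact hWconj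
  have hUtU : Uᵀ * U = 1 := by
    have := (Matrix.mem_orthogonalGroup_iff' (Fin d) ℝ).mp hU
    exact this
  have hDv : Matrix.diagonal v = Uᵀ * P * U := by
    rw [hPU]
    symm
    calc Uᵀ * (U * Matrix.diagonal v * Uᵀ) * U
        = (Uᵀ * U) * Matrix.diagonal v * (Uᵀ * U) := by simp only [Matrix.mul_assoc]
    _ = Matrix.diagonal v := by rw [hUtU]; simp
  have hUt : Uᵀ ∈ Matrix.orthogonalGroup (Fin d) ℝ := by
    rw [← star_eq_transposeR]; exact Unitary.star_mem hU
  refine ⟨U' * W * Uᵀ, mul_mem (mul_mem hU' hWmem) hUt, ?_⟩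
  have hVt : (U' * W * Uᵀ)ᵀ = U * Wᵀ * U'ᵀ := by
    simp [Matrix.transpose_mul, Matrix.mul_assoc]
  rw [hVt, hPU', hwv, hDv]
  simp only [Matrix.mul_assoc]

lemma trace_pow_measurableG (A : Matrix (Fin d) (Fin d) ℝ) (t : ℕ) :
    Measurable (fun R : Grass d k => (Matrix.trace (A * (R : Matrix (Fin d) (Fin d) ℝ))) ^ t) := by
  refine Measurable.pow_const ?_ t
  have h : (fun R : Grass d k => Matrix.trace (A * (R : Matrix (Fin d) (Fin d) ℝ)))
      = fun R : Grass d k => ∑ i, ∑ j, A i j * (R : Matrix (Fin d) (Fin d) ℝ) j i := by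
    funext R
    simp [Matrix.trace, Matrix.diag, Matrix.mul_apply]
  rw [h]
  exact Finset.measurable_sum _ fun i _ =>
    Finset.measurable_sum _ fun j _ => (measurable_entryG j i).const_mul (A i j)

lemma conjGrass_measurable {U : Matrix (Fin d) (Fin d) ℝ}
    (hU : U ∈ Matrix.orthogonalGroup (Fin d) ℝ) : Measurable (conjGrass (k := k) hU) := by
  apply Measurable.subtype_mk
  apply measurable_pi_lambda
  intro i
  apply measurable_pi_lambda
  intro j
  have h : (fun R : Grass d k => (U * (R : Matrix (Fin d) (Fin d) ℝ) * Uᵀ) i j)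
      = fun R : Grass d k =>
        ∑ b, (∑ a, U i a * (R : Matrix (Fin d) (Fin d) ℝ) a b) * Uᵀ b j := by
    funext R
    simp [Matrix.mul_apply]
  rw [h]; exact Finset.measurable_sum _ fun b _ =>
    (Finset.measurable_sum _ fun a _ => (measurable_entryG a b).const_mul (U i a)).mul_const
      (Uᵀ b j)

/-- The inner integral `∫ tr(QR)^t dσ(R)` does not depend on `Q`. -/
lemma integral_trace_pow_const {σ : Measure (Grass d k)} (hσ : IsOrthInvariant σ)
    (t : ℕ) (Q P0 : Grass d k) :
    ∫ R : Grass d k,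
        (Matrix.trace ((Q : Matrix (Fin d) (Fin d) ℝ) * (R : Matrix (Fin d) (Fin d) ℝ))) ^ t ∂σ =
      ∫ R : Grass d k,
        (Matrix.trace ((P0 : Matrix (Fin d) (Fin d) ℝ) * (R : Matrix (Fin d) (Fin d) ℝ))) ^ t ∂σ := by
  obtain ⟨V, hV, hQP⟩ := Grass.exists_conj P0.2 Q.2
  have hVt : Vᵀ ∈ Matrix.orthogonalGroup (Fin d) ℝ := by
    rw [← star_eq_transposeR]; exact Unitary.star_mem hV
  have hmeas := conjGrass_measurable (k := k) hVt
  have hgR : ∀ R : Grass d k, (conjGrass hVt R).1 = Vᵀ * R.1 * V := by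
    intro R
    have : (conjGrass hVt R).1 = Vᵀ * R.1 * Vᵀᵀ := rfl
    rw [this, Matrix.transpose_transpose]
  have hint : ∀ R : Grass d k, (Matrix.trace (Q.1 * R.1)) ^ t
      = (Matrix.trace (P0.1 * (conjGrass hVt R).1)) ^ t := by
    intro R
    congr 1
    calc Matrix.trace (Q.1 * R.1)
        = Matrix.trace ((V * P0.1) * (Vᵀ * R.1)) := by
          rw [hQP]; simp only [Matrix.mul_assoc]
    _ = Matrix.trace ((Vᵀ * R.1) * (V * P0.1)) := Matrix.trace_mul_comm _ _
    _ = Matrix.trace ((Vᵀ * R.1 * V) * P0.1) := by simp only [Matrix.mul_assoc]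
    _ = Matrix.trace (P0.1 * (Vᵀ * R.1 * V)) := Matrix.trace_mul_comm _ _
    _ = _ := by rw [hgR R]
  calc ∫ R : Grass d k, (Matrix.trace (Q.1 * R.1)) ^ t ∂σ
      = ∫ R : Grass d k, (Matrix.trace (P0.1 * (conjGrass hVt R).1)) ^ t ∂σ :=
        integral_congr_ae (ae_of_all _ fun R => hint R)
    _ = ∫ R : Grass d k, (Matrix.trace (P0.1 * R.1)) ^ t ∂(Measure.map (conjGrass hVt) σ) := by
        rw [integral_map hmeas.aemeasurable
          (trace_pow_measurableG (P0 : Matrix (Fin d) (Fin d) ℝ) t).aestronglyMeasurable]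
    _ = _ := by rw [hσ Vᵀ hVt]

end FFPAux

/-- The `t`-fusion frame potential of points `P j ∈ G_{k,d}` with weights
summing to one is bounded from below by the double integral
`∫∫ tr(PR)^t dσ_{k,d}(P) dσ_{k,d}(R)` for any `O(d)`-invariant Borel probability measure
`σ_{k,d}` on `G_{k,d}`. -/
theorem fusionFramePotential_lower_bound (d k t : ℕ) (hk1 : 1 ≤ k) (hkd : k ≤ d - 1)
    (σ : Measure (Grass d k)) [IsProbabilityMeasure σ] (hσ : IsOrthInvariant σ)
    (n : ℕ) (P : Fin n → Grass d k) (ω : Fin n → ℝ) (hω : ∑ j, ω j = 1) :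
    ∑ i, ∑ j, ω i * ω j *
        (Matrix.trace ((P i : Matrix (Fin d) (Fin d) ℝ) * (P j : Matrix (Fin d) (Fin d) ℝ))) ^ t ≥
      ∫ Q : Grass d k, ∫ R : Grass d k,
        (Matrix.trace ((Q : Matrix (Fin d) (Fin d) ℝ) * (R : Matrix (Fin d) (Fin d) ℝ))) ^ t
          ∂σ ∂σ := by
  classical
  have hn : n ≠ 0 := by rintro rfl; simp at hω
  obtain ⟨i0⟩ : Nonempty (Fin n) := ⟨⟨0, Nat.pos_of_ne_zero hn⟩⟩
  set P0 := P i0 with hP0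
  set cc : ℝ := ∫ R : Grass d k,
    (Matrix.trace ((P0 : Matrix (Fin d) (Fin d) ℝ) * (R : Matrix (Fin d) (Fin d) ℝ))) ^ t ∂σ
    with hccdef
  have hconst : ∀ Q : Grass d k, ∫ R : Grass d k,
      (Matrix.trace ((Q : Matrix (Fin d) (Fin d) ℝ) * (R : Matrix (Fin d) (Fin d) ℝ))) ^ t ∂σ
        = cc := fun Q => integral_trace_pow_const hσ t Q P0
  set m : (Fin t → Fin d × Fin d) → ℝ := fun g => ∫ Q : Grass d k, phiG d k t Q g ∂σ with hm
  have hexp : ∀ Q : Grass d k, ∫ R : Grass d k,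
      (Matrix.trace ((Q : Matrix (Fin d) (Fin d) ℝ) * (R : Matrix (Fin d) (Fin d) ℝ))) ^ t ∂σ
        = ∑ g, phiG d k t Q g * m g := by
    intro Q
    calc ∫ R : Grass d k,
        (Matrix.trace ((Q : Matrix (Fin d) (Fin d) ℝ) * (R : Matrix (Fin d) (Fin d) ℝ))) ^ t ∂σ
        = ∫ R : Grass d k, ∑ g, phiG d k t Q g * phiG d k t R g ∂σ :=
          integral_congr_ae (ae_of_all _ fun R => trace_pow_expand t Q R)
      _ = ∑ g, ∫ R : Grass d k, phiG d k t Q g * phiG d k t R g ∂σ :=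
          integral_finset_sum _ fun g _ => (phiG_integrable t σ g).const_mul _
      _ = ∑ g, phiG d k t Q g * m g :=
          Finset.sum_congr rfl fun g _ => integral_const_mul _ _
  have hsum : ∀ Q : Grass d k, ∑ g, phiG d k t Q g * m g = cc :=
    fun Q => (hexp Q).symm.trans (hconst Q)
  have hm2 : ∑ g, m g * m g = cc := by
    calc ∑ g, m g * m g
        = ∑ g, ∫ Q : Grass d k, m g * phiG d k t Q g ∂σ :=
          Finset.sum_congr rfl fun g _ => (integral_const_mul _ _).symm
      _ = ∫ Q : Grass d k, ∑ g, m g * phiG d k t Q g ∂σ :=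
          (integral_finset_sum _ fun g _ => (phiG_integrable t σ g).const_mul _).symm
      _ = ∫ _Q : Grass d k, cc ∂σ := by
          refine integral_congr_ae (ae_of_all _ fun Q => ?_)
          rw [← hsum Q]
          exact Finset.sum_congr rfl fun g _ => mul_comm _ _
      _ = cc := by simp
  have hRHS : (∫ Q : Grass d k, ∫ R : Grass d k,
      (Matrix.trace ((Q : Matrix (Fin d) (Fin d) ℝ) * (R : Matrix (Fin d) (Fin d) ℝ))) ^ t ∂σ ∂σ)
        = cc := by
    calc (∫ Q : Grass d k, ∫ R : Grass d k,
        (Matrix.trace ((Q : Matrix (Fin d) (Fin d) ℝ) * (R : Matrix (Fin d) (Fin d) ℝ))) ^ t ∂σ ∂σ)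
        = ∫ _Q : Grass d k, cc ∂σ := integral_congr_ae (ae_of_all _ fun Q => hconst Q)
      _ = cc := by simp
  set v : (Fin t → Fin d × Fin d) → ℝ := fun g => ∑ i, ω i * phiG d k t (P i) g with hv
  have hvv : ∑ g, v g * v g = ∑ i, ∑ j, ω i * ω j *
      (Matrix.trace ((P i : Matrix (Fin d) (Fin d) ℝ) * (P j : Matrix (Fin d) (Fin d) ℝ))) ^ t := by
    calc ∑ g, v g * v g
        = ∑ g, ∑ i, ∑ j, (ω i * phiG d k t (P i) g) * (ω j * phiG d k t (P j) g) :=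
          Finset.sum_congr rfl fun g _ => Finset.sum_mul_sum _ _ _ _
      _ = ∑ i, ∑ g, ∑ j, (ω i * phiG d k t (P i) g) * (ω j * phiG d k t (P j) g) :=
          Finset.sum_comm
      _ = ∑ i, ∑ j, ∑ g, (ω i * phiG d k t (P i) g) * (ω j * phiG d k t (P j) g) :=
          Finset.sum_congr rfl fun i _ => Finset.sum_comm
      _ = ∑ i, ∑ j, ω i * ω j * ∑ g, phiG d k t (P i) g * phiG d k t (P j) g := by
          refine Finset.sum_congr rfl fun i _ => Finset.sum_congr rfl fun j _ => ?_
          rw [Finset.mul_sum]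
          exact Finset.sum_congr rfl fun g _ => by ring
      _ = _ := by
          refine Finset.sum_congr rfl fun i _ => Finset.sum_congr rfl fun j _ => ?_
          rw [trace_pow_expand t (P i) (P j)]
  have hvm : ∑ g, v g * m g = cc := by
    calc ∑ g, v g * m g
        = ∑ g, ∑ i, (ω i * phiG d k t (P i) g) * m g :=
          Finset.sum_congr rfl fun g _ => Finset.sum_mul _ _ _
      _ = ∑ i, ∑ g, (ω i * phiG d k t (P i) g) * m g := Finset.sum_comm
      _ = ∑ i, ω i * ∑ g, phiG d k t (P i) g * m g := by
          refine Finset.sum_congr rfl fun i _ => ?_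
          rw [Finset.mul_sum]
          exact Finset.sum_congr rfl fun g _ => by ring
      _ = ∑ i, ω i * cc := Finset.sum_congr rfl fun i _ => by rw [hsum (P i)]
      _ = cc := by rw [← Finset.sum_mul, hω, one_mul]
  have hpos : 0 ≤ ∑ g, (v g - m g) ^ 2 := Finset.sum_nonneg fun g _ => sq_nonneg _
  have hexpand : ∑ g, (v g - m g) ^ 2
      = ∑ g, v g * v g - 2 * ∑ g, v g * m g + ∑ g, m g * m g := by
    rw [Finset.mul_sum, ← Finset.sum_sub_distrib, ← Finset.sum_add_distrib]
    exact Finset.sum_congr rfl fun g _ => by ring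
  rw [ge_iff_le, hRHS, ← hvv]
  rw [hexpand, hvm, hm2] at hpos
  linarith
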